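/- Hivert's quasisymmetric transpositions satisfy the braid relation: s̃_i s̃_{i+1} s̃_i = s̃_{i+1} s̃_i s̃_{i+1} as operations on weak compositions. -/

import Mathlib

/-- Hivert's quasisymmetric transposition on weak compositions: exchange entries
`i` and `i+1` if at least one of them is zero, otherwise do nothing.
(For `i` out of range it acts as the identity.) -/
def qswapAt (n i : ℕ) (α : Fin n → ℕ) : Fin n → ℕ :=
  if h : i + 1 < n then
    (if α ⟨i, by omega⟩ = 0 ∨ α ⟨i + 1, h⟩ = 0 then
      α ∘ Equiv.swap (⟨i, by omega⟩ : Fin n) ⟨i + 1, h⟩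
    else α)
  else α

/-- Hivert's quasisymmetric transpositions satisfy the braid relation
`s̃ᵢ s̃ᵢ₊₁ s̃ᵢ = s̃ᵢ₊₁ s̃ᵢ s̃ᵢ₊₁` as operations on weak compositions. -/
theorem qswap_braid (n i : ℕ) (hi : i + 2 < n) (α : Fin n → ℕ) :
    qswapAt n i (qswapAt n (i + 1) (qswapAt n i α))
      = qswapAt n (i + 1) (qswapAt n i (qswapAt n (i + 1) α)) := by
  have h1 : i + 1 < n := by omega
  set a : Fin n := ⟨i, by omega⟩ with ha'
  set b : Fin n := ⟨i+1, h1⟩ with hb'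
  set c : Fin n := ⟨i+2, hi⟩ with hc'
  have hab : a ≠ b := by simp [ha', hb', Fin.ext_iff]
  have hbc : b ≠ c := by simp [hb', hc', Fin.ext_iff]
  have hac : a ≠ c := by simp [ha', hc', Fin.ext_iff]
  have e1 : ∀ β : Fin n → ℕ, qswapAt n i β =
      if β a = 0 ∨ β b = 0 then β ∘ Equiv.swap a b else β := by
    intro β; simp only [qswapAt, dif_pos h1]; rfl
  have e2 : ∀ β : Fin n → ℕ, qswapAt n (i+1) β =
      if β b = 0 ∨ β c = 0 then β ∘ Equiv.swap b c else β := by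
    intro β; simp only [qswapAt, dif_pos hi]; rfl
  have hmul : Equiv.swap a b * Equiv.swap b c * Equiv.swap a b
      = Equiv.swap b c * Equiv.swap a b * Equiv.swap b c := by
    have h1 := Equiv.swap_mul_swap_mul_swap hab hac
    have h2 := Equiv.swap_mul_swap_mul_swap hbc.symm hac.symm
    rw [Equiv.swap_comm b a, Equiv.swap_comm c b] at h2
    rw [h1, h2, Equiv.swap_comm]
  have braid : ∀ β : Fin n → ℕ,
      ((β ∘ Equiv.swap a b) ∘ Equiv.swap b c) ∘ Equiv.swap a b
      = ((β ∘ Equiv.swap b c) ∘ Equiv.swap a b) ∘ Equiv.swap b c := by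
    intro β
    have : ∀ p q r : Equiv.Perm (Fin n),
        ((β ∘ p) ∘ q) ∘ r = β ∘ ⇑(p * q * r) := by
      intro p q r; simp [Function.comp_assoc]
    rw [this, this, hmul]
  rw [e1, e2, e1, e2, e1, e2]
  by_cases hA : α a = 0 <;> by_cases hB : α b = 0 <;> by_cases hC : α c = 0 <;>
    simp only [Function.comp_apply, Equiv.swap_apply_left, Equiv.swap_apply_right,
      Equiv.swap_apply_of_ne_of_ne hab hac, Equiv.swap_apply_of_ne_of_ne hac.symm hbc.symm,
      hA, hB, hC, if_true, if_false, true_or, or_true, or_self, or_false, false_or,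
      not_false_iff, if_neg] <;>
    first
      | rfl
      | exact braid α
      | (funext x; simp only [Function.comp_apply, Equiv.swap_apply_self])
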